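/- Let p ≥ 1 and T > 0. Let x, z : [0,T] → ℝ^d, suppose x has finite p-variation, and let c : {(s,t) : 0 ≤ s ≤ t ≤ T} → [0,∞) be superadditive, i.e. c(s,t) + c(t,u) ≤ c(s,u) for all s ≤ t ≤ u. Assume that for all 0 ≤ s ≤ t ≤ T, ‖z(t) − z(s)‖ ≤ c(s,t) + ‖x‖_{p,[s,t]}. Then z has finite p-variation and ‖z‖_{p,[0,T]}^p ≤ 2^{p−1} ( c(0,T)^p + ‖x‖_{p,[0,T]}^p ). -/

import Mathlib

/-- The set of partition sums `Σ_k ‖f(t_k) − f(t_{k−1})‖^p` over all finite partitions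
`a = t_0 ≤ t_1 ≤ … ≤ t_m = b` of `[a,b]`; its supremum is `‖f‖_{p,[a,b]}^p`. -/
def pVarSums {E : Type*} [NormedAddCommGroup E] (p a b : ℝ) (f : ℝ → E) : Set ℝ :=
  {S | ∃ (m : ℕ) (t : Fin (m + 1) → ℝ), Monotone t ∧ t 0 = a ∧ t (Fin.last m) = b ∧
    S = ∑ i : Fin m, ‖f (t i.succ) - f (t i.castSucc)‖ ^ p}

lemma pVar_mem_single {E : Type*} [NormedAddCommGroup E] (p a b : ℝ) (f : ℝ → E)
    (hab : a ≤ b) : ‖f b - f a‖ ^ p ∈ pVarSums p a b f := by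
  refine ⟨1, fun i => if i = 0 then a else b, ?_, ?_, ?_, ?_⟩
  · intro i j hij
    fin_cases i <;> fin_cases j <;> simp_all
  · simp
  · simp [Fin.last]
  · simp [Fin.sum_univ_succ]

lemma pVar_nonempty {E : Type*} [NormedAddCommGroup E] (p a b : ℝ) (f : ℝ → E)
    (hab : a ≤ b) : (pVarSums p a b f).Nonempty := ⟨_, pVar_mem_single p a b f hab⟩

lemma pVar_sSup_nonneg {E : Type*} [NormedAddCommGroup E] (p a b : ℝ) (f : ℝ → E)
    (hab : a ≤ b) (hbdd : BddAbove (pVarSums p a b f)) :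
    0 ≤ sSup (pVarSums p a b f) :=
  le_trans (Real.rpow_nonneg (norm_nonneg _) p) (le_csSup hbdd (pVar_mem_single p a b f hab))
lemma pVar_concat {E : Type*} [NormedAddCommGroup E] (p s t u : ℝ) (f : ℝ → E)
    {S₁ S₂ : ℝ} (h₁ : S₁ ∈ pVarSums p s t f) (h₂ : S₂ ∈ pVarSums p t u f) :
    S₁ + S₂ ∈ pVarSums p s u f := by
  obtain ⟨m, a, ha, ha0, haL, rfl⟩ := h₁
  obtain ⟨n, b, hb, hb0, hbL, rfl⟩ := h₂
  set w : Fin (m + n + 1) → ℝ :=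
    fun i => if h : (i : ℕ) ≤ m then a ⟨i, by omega⟩ else b ⟨(i : ℕ) - m, by omega⟩ with hw
  have w_le : ∀ (i : Fin (m + n + 1)) (h : (i : ℕ) ≤ m), w i = a ⟨i, by omega⟩ :=
    fun i h => dif_pos h
  have w_gt : ∀ (i : Fin (m + n + 1)) (h : ¬ (i : ℕ) ≤ m),
      w i = b ⟨(i : ℕ) - m, by omega⟩ := fun i h => dif_neg h
  refine ⟨m + n, w, ?_, ?_, ?_, ?_⟩
  · intro i j hij
    have hij' : (i : ℕ) ≤ (j : ℕ) := hij
    by_cases hi : (i : ℕ) ≤ m <;> by_cases hj : (j : ℕ) ≤ m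
    · rw [w_le i hi, w_le j hj]
      exact ha (Fin.mk_le_mk.mpr hij')
    · rw [w_le i hi, w_gt j hj]
      calc a ⟨i, by omega⟩ ≤ a (Fin.last m) := ha (Fin.mk_le_mk.mpr (by omega))
        _ = b 0 := by rw [haL, hb0]
        _ ≤ b ⟨(j : ℕ) - m, by omega⟩ := hb (Fin.zero_le _)
    · omega
    · rw [w_gt i hi, w_gt j hj]
      exact hb (Fin.mk_le_mk.mpr (by omega))
  · rw [w_le 0 (by simp)]
    rw [← ha0]
    congr 1
  · by_cases h : (Fin.last (m + n) : ℕ) ≤ m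
    · have hn : n = 0 := by simp [Fin.last] at h; omega
      subst hn
      rw [w_le _ h]
      have htu : t = u := by rw [← hb0, ← hbL]; rfl
      rw [← htu, ← haL]
      congr 1
    · rw [w_gt _ h]
      rw [← hbL]
      congr 1
      ext
      simp [Fin.last]
  · rw [Fin.sum_univ_add]
    congr 1
    · apply Finset.sum_congr rfl
      intro i _
      have e1 : w (Fin.castAdd n i).succ = a i.succ := by
        rw [w_le _ (by simp only [Fin.val_succ, Fin.coe_castAdd]; omega)]
        congr 1
      have e2 : w (Fin.castAdd n i).castSucc = a i.castSucc := by
        rw [w_le _ (by simp)]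
        congr 1
      rw [e1, e2]
    · apply Finset.sum_congr rfl
      intro i _
      have e1 : w (Fin.natAdd m i).succ = b i.succ := by
        rw [w_gt _ (by simp only [Fin.val_succ, Fin.coe_natAdd]; omega)]
        congr 1
        ext
        simp
        omega
      have e2 : w (Fin.natAdd m i).castSucc = b i.castSucc := by
        by_cases hi0 : (i : ℕ) = 0
        · rw [w_le _ (by simp [hi0])]
          have : (⟨((Fin.natAdd m i).castSucc : ℕ), by simp; omega⟩ : Fin (m + 1)) = Fin.last m := by
            ext; simp [Fin.last, hi0]
          rw [this, haL, ← hb0]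
          congr 1
          ext
          simp [hi0]
        · rw [w_gt _ (by simp; omega)]
          congr 1
          ext
          simp
      rw [e1, e2]

lemma two_rpow_ineq {a b q : ℝ} (ha : 0 ≤ a) (hb : 0 ≤ b) (hq : 1 ≤ q) :
    (a + b) ^ q ≤ 2 ^ (q - 1) * (a ^ q + b ^ q) := by
  have h := NNReal.rpow_add_le_mul_rpow_add_rpow a.toNNReal b.toNNReal hq
  have h2 := NNReal.coe_le_coe.mpr h
  simp only [NNReal.coe_rpow, NNReal.coe_mul, NNReal.coe_add, NNReal.coe_ofNat,
    Real.coe_toNNReal a ha, Real.coe_toNNReal b hb] at h2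
  exact h2

lemma sum_rpow_le {q : ℝ} (hq : 1 ≤ q) : ∀ (m : ℕ) (a : Fin m → ℝ), (∀ i, 0 ≤ a i) →
    ∑ i, (a i) ^ q ≤ (∑ i, a i) ^ q := by
  intro m
  induction m with
  | zero => intro a ha; simp [Real.rpow_natCast]; positivity
  | succ n ih =>
    intro a ha
    rw [Fin.sum_univ_castSucc, Fin.sum_univ_castSucc (f := a)]
    calc ∑ i : Fin n, a i.castSucc ^ q + a (Fin.last n) ^ q
        ≤ (∑ i : Fin n, a i.castSucc) ^ q + a (Fin.last n) ^ q := by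
          gcongr; exact ih _ (fun i => ha _)
      _ ≤ (∑ i : Fin n, a i.castSucc + a (Fin.last n)) ^ q := by
          have := NNReal.add_rpow_le_rpow_add
            ⟨∑ i : Fin n, a i.castSucc, Finset.sum_nonneg fun i _ => ha _⟩ ⟨a (Fin.last n), ha _⟩ hq
          have h2 := NNReal.coe_le_coe.mpr this
          exact h2

lemma telescope_superadd {T : ℝ} (g : ℝ → ℝ → ℝ)
    (g0 : ∀ r, 0 ≤ r → r ≤ T → 0 ≤ g r r)
    (gs : ∀ s t u : ℝ, 0 ≤ s → s ≤ t → t ≤ u → u ≤ T → g s t + g t u ≤ g s u) :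
    ∀ (m : ℕ) (t : Fin (m + 1) → ℝ), Monotone t → 0 ≤ t 0 → t (Fin.last m) ≤ T →
      ∑ i : Fin m, g (t i.castSucc) (t i.succ) ≤ g (t 0) (t (Fin.last m)) := by
  intro m
  induction m with
  | zero => intro t _ h0 hL; simpa using g0 (t 0) h0 (by simpa using hL)
  | succ n ih =>
    intro t ht h0 hL
    rw [Fin.sum_univ_castSucc]
    have key := ih (t ∘ Fin.castSucc) (ht.comp (fun i j hij => Fin.castSucc_le_castSucc_iff.mpr hij))
      (by simpa using h0)
      (le_trans (ht (Fin.le_last _)) hL)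
    calc ∑ i : Fin n, g (t i.castSucc.castSucc) (t i.castSucc.succ) + g (t (Fin.last n).castSucc) (t (Fin.last n).succ)
        ≤ g (t 0) (t (Fin.last n).castSucc) + g (t (Fin.last n).castSucc) (t (Fin.last n).succ) := by
          gcongr ?_ + _
          simp only [Fin.succ_castSucc]
          simpa using key
      _ ≤ g (t 0) (t (Fin.last (n + 1))) := by
          have := gs (t 0) (t (Fin.last n).castSucc) (t (Fin.last n).succ) h0
            (ht (Fin.zero_le _)) (ht (Fin.castSucc_le_succ _)) (by
              have : (Fin.last n).succ = Fin.last (n+1) := rfl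
              rw [this]; exact hL)
          have e : (Fin.last n).succ = Fin.last (n+1) := rfl
          rwa [e] at this
lemma pVar_sSup_superadd {E : Type*} [NormedAddCommGroup E] (p T : ℝ) (f : ℝ → E)
    (hx : ∀ s t : ℝ, 0 ≤ s → s ≤ t → t ≤ T → BddAbove (pVarSums p s t f))
    {s t u : ℝ} (h0 : 0 ≤ s) (hst : s ≤ t) (htu : t ≤ u) (huT : u ≤ T) :
    sSup (pVarSums p s t f) + sSup (pVarSums p t u f) ≤ sSup (pVarSums p s u f) := by
  have hC := hx s u h0 (hst.trans htu) huT
  have neA := pVar_nonempty p s t f hst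
  have neB := pVar_nonempty p t u f htu
  have h1 : sSup (pVarSums p s t f) ≤ sSup (pVarSums p s u f) - sSup (pVarSums p t u f) := by
    refine csSup_le neA fun a haA => ?_
    have h2 : sSup (pVarSums p t u f) ≤ sSup (pVarSums p s u f) - a := by
      refine csSup_le neB fun b hbB => ?_
      have := le_csSup hC (pVar_concat p s t u f haA hbB)
      linarith
    linarith
  linarith


/-- if `x` has finite `p`-variation on `[0,T]`, `c` is a nonnegative
superadditive function of pairs `s ≤ t`, and
`‖z(t) − z(s)‖ ≤ c(s,t) + ‖x‖_{p,[s,t]}` for all `0 ≤ s ≤ t ≤ T`, then `z` has finite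
`p`-variation and `‖z‖_{p,[0,T]}^p ≤ 2^{p−1} (c(0,T)^p + ‖x‖_{p,[0,T]}^p)`. -/
theorem stmt_13 {d : ℕ} (p T : ℝ) (hp : 1 ≤ p) (hT : 0 < T)
    (x z : ℝ → EuclideanSpace ℝ (Fin d))
    (hx : ∀ s t : ℝ, 0 ≤ s → s ≤ t → t ≤ T → BddAbove (pVarSums p s t x))
    (c : ℝ → ℝ → ℝ) (hc0 : ∀ s t : ℝ, 0 ≤ s → s ≤ t → t ≤ T → 0 ≤ c s t)
    (hcsuper : ∀ s t u : ℝ, 0 ≤ s → s ≤ t → t ≤ u → u ≤ T → c s t + c t u ≤ c s u)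
    (hz : ∀ s t : ℝ, 0 ≤ s → s ≤ t → t ≤ T →
      ‖z t - z s‖ ≤ c s t + sSup (pVarSums p s t x) ^ (1 / p)) :
    BddAbove (pVarSums p 0 T z) ∧
      sSup (pVarSums p 0 T z) ≤
        2 ^ (p - 1) * ((c 0 T) ^ p + sSup (pVarSums p 0 T x)) := by
  set X := sSup (pVarSums p 0 T x) with hX
  set B := 2 ^ (p - 1) * ((c 0 T) ^ p + X) with hB
  have key : ∀ S ∈ pVarSums p 0 T z, S ≤ B := by
    rintro S ⟨m, t, ht, ht0, htL, rfl⟩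
    have hterm : ∀ i : Fin m, ‖z (t i.succ) - z (t i.castSucc)‖ ^ p ≤
        2 ^ (p - 1) * (c (t i.castSucc) (t i.succ) ^ p +
          sSup (pVarSums p (t i.castSucc) (t i.succ) x)) := by
      intro i
      have h0i : (0 : ℝ) ≤ t i.castSucc := ht0 ▸ ht (Fin.zero_le _)
      have hsti : t i.castSucc ≤ t i.succ := ht (Fin.castSucc_le_succ i)
      have hTi : t i.succ ≤ T := htL ▸ ht (Fin.le_last _)
      have hci := hc0 _ _ h0i hsti hTi
      have hVi := pVar_sSup_nonneg p _ _ x hsti (hx _ _ h0i hsti hTi)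
      have h1 : ‖z (t i.succ) - z (t i.castSucc)‖ ^ p ≤
          (c (t i.castSucc) (t i.succ) +
            sSup (pVarSums p (t i.castSucc) (t i.succ) x) ^ (1 / p)) ^ p :=
        Real.rpow_le_rpow (norm_nonneg _) (hz _ _ h0i hsti hTi) (le_trans zero_le_one hp)
      refine h1.trans ?_
      have h2 := two_rpow_ineq hci (Real.rpow_nonneg hVi (1 / p)) hp
      refine h2.trans (le_of_eq ?_)
      have h3 : (sSup (pVarSums p (t i.castSucc) (t i.succ) x) ^ (1 / p)) ^ p =
          sSup (pVarSums p (t i.castSucc) (t i.succ) x) := by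
        rw [← Real.rpow_mul hVi, one_div_mul_cancel (by linarith : p ≠ 0), Real.rpow_one]
      rw [h3]
    have hcnn : ∀ i : Fin m, 0 ≤ c (t i.castSucc) (t i.succ) := fun i =>
      hc0 _ _ (ht0 ▸ ht (Fin.zero_le _)) (ht (Fin.castSucc_le_succ i)) (htL ▸ ht (Fin.le_last _))
    have hcsum : ∑ i : Fin m, c (t i.castSucc) (t i.succ) ^ p ≤ c 0 T ^ p := by
      have hA := sum_rpow_le hp m (fun i => c (t i.castSucc) (t i.succ)) hcnn
      have hBsum : ∑ i : Fin m, c (t i.castSucc) (t i.succ) ≤ c (t 0) (t (Fin.last m)) :=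
        telescope_superadd c (fun r h1 h2 => hc0 r r h1 le_rfl h2) hcsuper m t ht
          (ht0 ▸ le_rfl) (htL ▸ le_rfl)
      rw [ht0, htL] at hBsum
      exact hA.trans (Real.rpow_le_rpow (Finset.sum_nonneg fun i _ => hcnn i) hBsum
        (by linarith))
    have hVsum : ∑ i : Fin m, sSup (pVarSums p (t i.castSucc) (t i.succ) x) ≤ X := by
      have := telescope_superadd (T := T) (fun s u => sSup (pVarSums p s u x))
        (fun r h1 h2 => pVar_sSup_nonneg p r r x le_rfl (hx r r h1 le_rfl h2))
        (fun s' t' u' h1 h2 h3 h4 => pVar_sSup_superadd p T x hx h1 h2 h3 h4)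
        m t ht (ht0 ▸ le_rfl) (htL ▸ le_rfl)
      rwa [ht0, htL] at this
    calc ∑ i : Fin m, ‖z (t i.succ) - z (t i.castSucc)‖ ^ p
        ≤ ∑ i : Fin m, 2 ^ (p - 1) * (c (t i.castSucc) (t i.succ) ^ p +
            sSup (pVarSums p (t i.castSucc) (t i.succ) x)) :=
          Finset.sum_le_sum fun i _ => hterm i
      _ = 2 ^ (p - 1) * (∑ i : Fin m, c (t i.castSucc) (t i.succ) ^ p +
            ∑ i : Fin m, sSup (pVarSums p (t i.castSucc) (t i.succ) x)) := by
          rw [← Finset.mul_sum, Finset.sum_add_distrib]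
      _ ≤ B := by
          rw [hB]
          have h2p : (0 : ℝ) ≤ 2 ^ (p - 1) := Real.rpow_nonneg (by norm_num) _
          exact mul_le_mul_of_nonneg_left (add_le_add hcsum hVsum) h2p
  refine ⟨⟨B, fun S hS => key S hS⟩, csSup_le (pVar_nonempty p 0 T z hT.le) key⟩
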